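/- arXiv:1809.07313 — 2 statements merged into one kernel-verified Lean document; each statement's English description precedes it below -/
import Mathlib

section
/- The limit as k → ∞ of log α(C₅[k]) / log k exists and equals 1, where C₅ is the 5-cycle and α(C₅[k]) is the independence number of the pebble configuration graph C₅[k]. -/
open Finset

/-- A configuration of `k` identical pebbles on the vertex set `V`. -/
def Config (V : Type*) [Fintype V] (k : ℕ) : Type _ :=
  {f : V → ℕ // ∑ v, f v = k}

/-- The pebble configuration graph `G[k]`: two distinct configurations are adjacent
iff there is a transport `m` moving each pebble along an edge of `G` or keeping it in place. -/
def PebbleGraph {V : Type*} [Fintype V] (G : SimpleGraph V) (k : ℕ) :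
    SimpleGraph (Config V k) where
  Adj f g := f ≠ g ∧ ∃ m : V → V → ℕ,
    (∀ u w, m u w ≠ 0 → u = w ∨ G.Adj u w) ∧
    (∀ u, ∑ w, m u w = f.1 u) ∧ (∀ u, ∑ w, m w u = g.1 u)
  symm := ⟨by
    rintro f g ⟨hne, m, h1, h2, h3⟩
    exact ⟨hne.symm, fun u w => m w u,
      fun u w h => (h1 w u h).imp Eq.symm fun h => G.adj_symm h, h3, h2⟩⟩
  loopless := ⟨fun f h => h.1 rfl⟩

/-- The independence number of a graph: the supremum of sizes of finite sets of
pairwise non-adjacent vertices. -/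
noncomputable def indepNum {W : Type*} (G : SimpleGraph W) : ℕ :=
  sSup {n | ∃ s : Finset W, (↑s : Set W).Pairwise (fun a b => ¬ G.Adj a b) ∧ s.card = n}

/-- The 5-cycle on vertices `Fin 5`, with `u` adjacent to `u + 1` (mod 5). -/
def C5 : SimpleGraph (Fin 5) where
  Adj u w := u ≠ w ∧ (w = u + 1 ∨ u = w + 1)
  symm := ⟨fun _ _ h => ⟨h.1.symm, h.2.symm⟩⟩
  loopless := ⟨fun _ h => h.1 rfl⟩

namespace C5Aux

/-- closed-neighborhood sum of a configuration at a vertex -/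
def nb (f : Fin 5 → ℕ) (v : Fin 5) : ℕ := f (v + 4) + f v + f (v + 1)

/-- the constant (diagonal) point -/
def diagP (t : ℕ) : Fin 5 → ℕ := fun _ => t

/-- the edge point: value `k - s` on the edge `{v, v+1}`, value `s` elsewhere -/
def edgeP (k : ℕ) (v : Fin 5) (s : ℕ) : Fin 5 → ℕ :=
  fun w => if w = v ∨ w = v + 1 then k - s else s

/-- the piercing family -/
def Xf (k : ℕ) : Finset (Fin 5 → ℕ) :=
  (Finset.range (k + 1)).biUnion fun s =>
    {diagP s, edgeP k 0 s, edgeP k 1 s, edgeP k 2 s, edgeP k 3 s, edgeP k 4 s}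

lemma Xf_card (k : ℕ) : (Xf k).card ≤ 6 * (k + 1) := by
  refine Finset.card_biUnion_le.trans ?_
  have h : ∀ s ∈ Finset.range (k + 1),
      ({diagP s, edgeP k 0 s, edgeP k 1 s, edgeP k 2 s, edgeP k 3 s, edgeP k 4 s} :
        Finset (Fin 5 → ℕ)).card ≤ 6 := by
    intro s _
    refine (Finset.card_insert_le _ _).trans (Nat.succ_le_succ ?_)
    refine (Finset.card_insert_le _ _).trans (Nat.succ_le_succ ?_)
    refine (Finset.card_insert_le _ _).trans (Nat.succ_le_succ ?_)
    refine (Finset.card_insert_le _ _).trans (Nat.succ_le_succ ?_)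
    refine (Finset.card_insert_le _ _).trans (Nat.succ_le_succ ?_)
    simp
  calc ∑ s ∈ Finset.range (k + 1),
        ({diagP s, edgeP k 0 s, edgeP k 1 s, edgeP k 2 s, edgeP k 3 s, edgeP k 4 s} :
          Finset (Fin 5 → ℕ)).card
      ≤ ∑ _s ∈ Finset.range (k + 1), 6 := Finset.sum_le_sum h
    _ = 6 * (k + 1) := by simp [mul_comm]

/-- every configuration is pierced by some point of the family -/
lemma exists_pierce' (k : ℕ) (f : Fin 5 → ℕ)
    (hsum : f 0 + f 1 + f 2 + f 3 + f 4 = k) :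
    ∃ x ∈ Xf k, ∀ v, f v ≤ x v ∧ x v ≤ nb f v := by
  by_cases hU : ∃ v : Fin 5,
      f (v+1) + f (v+2) + f (v+3) < f v ∨ f (v+2) + f (v+3) + f (v+4) < f v
  · obtain ⟨v, hv⟩ := hU
    fin_cases v <;> simp only [Fin.isValue, Fin.reduceAdd] at hv
    -- v = 0
    · have hA : f 1 + f 2 + f 3 < f 0 ∨ f 2 + f 3 + f 4 < f 0 := hv
      have h2 : f 2 ≤ f 0 := by omega
      have h3 : f 3 ≤ f 0 := by omega
      rcases le_total (f 1) (f 4) with hc | hc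
      · refine ⟨edgeP k 4 (f 1 + f 2 + f 3),
          Finset.mem_biUnion.mpr ⟨f 1 + f 2 + f 3, Finset.mem_range.mpr (by omega), by simp⟩, ?_⟩
        intro w; fin_cases w <;> simp [edgeP, nb] <;> omega
      · refine ⟨edgeP k 0 (f 2 + f 3 + f 4),
          Finset.mem_biUnion.mpr ⟨f 2 + f 3 + f 4, Finset.mem_range.mpr (by omega), by simp⟩, ?_⟩
        intro w; fin_cases w <;> simp [edgeP, nb] <;> omega
    -- v = 1
    · have hA : f 2 + f 3 + f 4 < f 1 ∨ f 3 + f 4 + f 0 < f 1 := hv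
      have h2 : f 3 ≤ f 1 := by omega
      have h3 : f 4 ≤ f 1 := by omega
      rcases le_total (f 2) (f 0) with hc | hc
      · refine ⟨edgeP k 0 (f 2 + f 3 + f 4),
          Finset.mem_biUnion.mpr ⟨f 2 + f 3 + f 4, Finset.mem_range.mpr (by omega), by simp⟩, ?_⟩
        intro w; fin_cases w <;> simp [edgeP, nb] <;> omega
      · refine ⟨edgeP k 1 (f 3 + f 4 + f 0),
          Finset.mem_biUnion.mpr ⟨f 3 + f 4 + f 0, Finset.mem_range.mpr (by omega), by simp⟩, ?_⟩
        intro w; fin_cases w <;> simp [edgeP, nb] <;> omega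
    -- v = 2
    · have hA : f 3 + f 4 + f 0 < f 2 ∨ f 4 + f 0 + f 1 < f 2 := hv
      have h2 : f 4 ≤ f 2 := by omega
      have h3 : f 0 ≤ f 2 := by omega
      rcases le_total (f 3) (f 1) with hc | hc
      · refine ⟨edgeP k 1 (f 3 + f 4 + f 0),
          Finset.mem_biUnion.mpr ⟨f 3 + f 4 + f 0, Finset.mem_range.mpr (by omega), by simp⟩, ?_⟩
        intro w; fin_cases w <;> simp [edgeP, nb] <;> omega
      · refine ⟨edgeP k 2 (f 4 + f 0 + f 1),
          Finset.mem_biUnion.mpr ⟨f 4 + f 0 + f 1, Finset.mem_range.mpr (by omega), by simp⟩, ?_⟩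
        intro w; fin_cases w <;> simp [edgeP, nb] <;> omega
    -- v = 3
    · have hA : f 4 + f 0 + f 1 < f 3 ∨ f 0 + f 1 + f 2 < f 3 := hv
      have h2 : f 0 ≤ f 3 := by omega
      have h3 : f 1 ≤ f 3 := by omega
      rcases le_total (f 4) (f 2) with hc | hc
      · refine ⟨edgeP k 2 (f 4 + f 0 + f 1),
          Finset.mem_biUnion.mpr ⟨f 4 + f 0 + f 1, Finset.mem_range.mpr (by omega), by simp⟩, ?_⟩
        intro w; fin_cases w <;> simp [edgeP, nb] <;> omega
      · refine ⟨edgeP k 3 (f 0 + f 1 + f 2),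
          Finset.mem_biUnion.mpr ⟨f 0 + f 1 + f 2, Finset.mem_range.mpr (by omega), by simp⟩, ?_⟩
        intro w; fin_cases w <;> simp [edgeP, nb] <;> omega
    -- v = 4
    · have hA : f 0 + f 1 + f 2 < f 4 ∨ f 1 + f 2 + f 3 < f 4 := hv
      have h2 : f 1 ≤ f 4 := by omega
      have h3 : f 2 ≤ f 4 := by omega
      rcases le_total (f 0) (f 3) with hc | hc
      · refine ⟨edgeP k 3 (f 0 + f 1 + f 2),
          Finset.mem_biUnion.mpr ⟨f 0 + f 1 + f 2, Finset.mem_range.mpr (by omega), by simp⟩, ?_⟩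
        intro w; fin_cases w <;> simp [edgeP, nb] <;> omega
      · refine ⟨edgeP k 4 (f 1 + f 2 + f 3),
          Finset.mem_biUnion.mpr ⟨f 1 + f 2 + f 3, Finset.mem_range.mpr (by omega), by simp⟩, ?_⟩
        intro w; fin_cases w <;> simp [edgeP, nb] <;> omega
  · push_neg at hU
    have b0 := hU 0
    have b1 := hU 1
    have b2 := hU 2
    have b3 := hU 3
    have b4 := hU 4
    simp only [Fin.isValue, Fin.reduceAdd] at b0 b1 b2 b3 b4
    set T := (f 0).max ((f 1).max ((f 2).max ((f 3).max (f 4)))) with hT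
    have hT0 : f 0 ≤ T := le_max_left _ _
    have hT1 : f 1 ≤ T := le_trans (le_max_left _ _) (le_max_right _ _)
    have hT2 : f 2 ≤ T :=
      le_trans (le_trans (le_max_left _ _) (le_max_right _ _)) (le_max_right _ _)
    have hT3 : f 3 ≤ T :=
      le_trans (le_trans (le_trans (le_max_left _ _) (le_max_right _ _)) (le_max_right _ _))
        (le_max_right _ _)
    have hT4 : f 4 ≤ T :=
      le_trans (le_trans (le_trans (le_max_right _ _) (le_max_right _ _)) (le_max_right _ _))
        (le_max_right _ _)
    have hTle : T ≤ k := by rw [hT]; simp only [Nat.max_le]; omega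
    have hN0 : T ≤ f 4 + f 0 + f 1 := by rw [hT]; simp only [Nat.max_le]; omega
    have hN1 : T ≤ f 0 + f 1 + f 2 := by rw [hT]; simp only [Nat.max_le]; omega
    have hN2 : T ≤ f 1 + f 2 + f 3 := by rw [hT]; simp only [Nat.max_le]; omega
    have hN3 : T ≤ f 2 + f 3 + f 4 := by rw [hT]; simp only [Nat.max_le]; omega
    have hN4 : T ≤ f 3 + f 4 + f 0 := by rw [hT]; simp only [Nat.max_le]; omega
    refine ⟨diagP T, Finset.mem_biUnion.mpr ⟨T, Finset.mem_range.mpr (by omega), by simp⟩, ?_⟩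
    intro w
    constructor
    · show f w ≤ T
      fin_cases w <;> first | exact hT0 | exact hT1 | exact hT2 | exact hT3 | exact hT4
    · show T ≤ nb f w
      fin_cases w <;> first | exact hN0 | exact hN1 | exact hN2 | exact hN3 | exact hN4

/-- If some point pierces both `f` and `g`, then they are adjacent in the pebble graph. -/
lemma adj_of_pierce {k : ℕ} (f g : Config (Fin 5) k) (hne : f ≠ g) (x : Fin 5 → ℕ)
    (hf : ∀ v, f.1 v ≤ x v ∧ x v ≤ nb f.1 v)
    (hg : ∀ v, g.1 v ≤ x v ∧ x v ≤ nb g.1 v) :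
    (PebbleGraph C5 k).Adj f g := by
  have hfs : f.1 0 + f.1 1 + f.1 2 + f.1 3 + f.1 4 = k := by
    have := f.2; rwa [Fin.sum_univ_five] at this
  have hgs : g.1 0 + g.1 1 + g.1 2 + g.1 3 + g.1 4 = k := by
    have := g.2; rwa [Fin.sum_univ_five] at this
  have Hf0 : f.1 0 ≤ x 0 ∧ x 0 ≤ f.1 4 + f.1 0 + f.1 1 := hf 0
  have Hf1 : f.1 1 ≤ x 1 ∧ x 1 ≤ f.1 0 + f.1 1 + f.1 2 := hf 1
  have Hf2 : f.1 2 ≤ x 2 ∧ x 2 ≤ f.1 1 + f.1 2 + f.1 3 := hf 2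
  have Hf3 : f.1 3 ≤ x 3 ∧ x 3 ≤ f.1 2 + f.1 3 + f.1 4 := hf 3
  have Hf4 : f.1 4 ≤ x 4 ∧ x 4 ≤ f.1 3 + f.1 4 + f.1 0 := hf 4
  have Hg0 : g.1 0 ≤ x 0 ∧ x 0 ≤ g.1 4 + g.1 0 + g.1 1 := hg 0
  have Hg1 : g.1 1 ≤ x 1 ∧ x 1 ≤ g.1 0 + g.1 1 + g.1 2 := hg 1
  have Hg2 : g.1 2 ≤ x 2 ∧ x 2 ≤ g.1 1 + g.1 2 + g.1 3 := hg 2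
  have Hg3 : g.1 3 ≤ x 3 ∧ x 3 ≤ g.1 2 + g.1 3 + g.1 4 := hg 3
  have Hg4 : g.1 4 ≤ x 4 ∧ x 4 ≤ g.1 3 + g.1 4 + g.1 0 := hg 4
  obtain ⟨s1, hs1⟩ : ∃ s : ℤ, s = (f.1 1 : ℤ) - g.1 1 := ⟨_, rfl⟩
  obtain ⟨s2, hs2⟩ : ∃ s : ℤ, s = s1 + (f.1 2 : ℤ) - g.1 2 := ⟨_, rfl⟩
  obtain ⟨s3, hs3⟩ : ∃ s : ℤ, s = s2 + (f.1 3 : ℤ) - g.1 3 := ⟨_, rfl⟩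
  obtain ⟨s4, hs4⟩ : ∃ s : ℤ, s = s3 + (f.1 4 : ℤ) - g.1 4 := ⟨_, rfl⟩
  obtain ⟨t, ht⟩ : ∃ t : ℤ, t = min ((f.1 0 : ℤ))
      (min ((f.1 1 : ℤ) - s1) (min ((f.1 2 : ℤ) - s2)
        (min ((f.1 3 : ℤ) - s3) ((f.1 4 : ℤ) - s4)))) := ⟨_, rfl⟩
  have hR0 : t ≤ (f.1 0 : ℤ) := ht ▸ min_le_left _ _
  have hR1 : t ≤ (f.1 1 : ℤ) - s1 := ht ▸ (min_le_right _ _).trans (min_le_left _ _)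
  have hR2 : t ≤ (f.1 2 : ℤ) - s2 :=
    ht ▸ (min_le_right _ _).trans ((min_le_right _ _).trans (min_le_left _ _))
  have hR3 : t ≤ (f.1 3 : ℤ) - s3 :=
    ht ▸ (min_le_right _ _).trans ((min_le_right _ _).trans
      ((min_le_right _ _).trans (min_le_left _ _)))
  have hR4 : t ≤ (f.1 4 : ℤ) - s4 :=
    ht ▸ (min_le_right _ _).trans ((min_le_right _ _).trans
      ((min_le_right _ _).trans (min_le_right _ _)))
  have hL0 : -(f.1 0 : ℤ) - s4 ≤ t := by
    rw [ht]
    refine le_min ?_ (le_min ?_ (le_min ?_ (le_min ?_ ?_))) <;> omega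
  have hL1 : -(f.1 1 : ℤ) ≤ t := by
    rw [ht]
    refine le_min ?_ (le_min ?_ (le_min ?_ (le_min ?_ ?_))) <;> omega
  have hL2 : -(f.1 2 : ℤ) - s1 ≤ t := by
    rw [ht]
    refine le_min ?_ (le_min ?_ (le_min ?_ (le_min ?_ ?_))) <;> omega
  have hL3 : -(f.1 3 : ℤ) - s2 ≤ t := by
    rw [ht]
    refine le_min ?_ (le_min ?_ (le_min ?_ (le_min ?_ ?_))) <;> omega
  have hL4 : -(f.1 4 : ℤ) - s3 ≤ t := by
    rw [ht]
    refine le_min ?_ (le_min ?_ (le_min ?_ (le_min ?_ ?_))) <;> omega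
  clear ht
  refine ⟨hne,
    ![![f.1 0 - t.toNat - (-(t + s4)).toNat, t.toNat, 0, 0, (-(t + s4)).toNat],
      ![(-t).toNat, f.1 1 - (t + s1).toNat - (-t).toNat, (t + s1).toNat, 0, 0],
      ![0, (-(t + s1)).toNat, f.1 2 - (t + s2).toNat - (-(t + s1)).toNat, (t + s2).toNat, 0],
      ![0, 0, (-(t + s2)).toNat, f.1 3 - (t + s3).toNat - (-(t + s2)).toNat, (t + s3).toNat],
      ![(t + s4).toNat, 0, 0, (-(t + s3)).toNat, f.1 4 - (t + s4).toNat - (-(t + s3)).toNat]],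
    ?_, ?_, ?_⟩
  · intro u w h
    fin_cases u <;> fin_cases w <;>
      first
        | exact Or.inl rfl
        | exact Or.inr ⟨by decide, by decide⟩
        | exact absurd rfl h
  · intro u
    fin_cases u <;> rw [Fin.sum_univ_five]
    · show f.1 0 - t.toNat - (-(t + s4)).toNat + t.toNat + 0 + 0 + (-(t + s4)).toNat = f.1 0
      omega
    · show (-t).toNat + (f.1 1 - (t + s1).toNat - (-t).toNat) + (t + s1).toNat + 0 + 0 = f.1 1
      omega
    · show 0 + (-(t + s1)).toNat + (f.1 2 - (t + s2).toNat - (-(t + s1)).toNat)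
        + (t + s2).toNat + 0 = f.1 2
      omega
    · show 0 + 0 + (-(t + s2)).toNat + (f.1 3 - (t + s3).toNat - (-(t + s2)).toNat)
        + (t + s3).toNat = f.1 3
      omega
    · show (t + s4).toNat + 0 + 0 + (-(t + s3)).toNat
        + (f.1 4 - (t + s4).toNat - (-(t + s3)).toNat) = f.1 4
      omega
  · intro u
    fin_cases u <;> rw [Fin.sum_univ_five]
    · show f.1 0 - t.toNat - (-(t + s4)).toNat + (-t).toNat + 0 + 0 + (t + s4).toNat = g.1 0
      omega
    · show t.toNat + (f.1 1 - (t + s1).toNat - (-t).toNat) + (-(t + s1)).toNat + 0 + 0 = g.1 1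
      omega
    · show 0 + (t + s1).toNat + (f.1 2 - (t + s2).toNat - (-(t + s1)).toNat)
        + (-(t + s2)).toNat + 0 = g.1 2
      omega
    · show 0 + 0 + (t + s2).toNat + (f.1 3 - (t + s3).toNat - (-(t + s2)).toNat)
        + (-(t + s3)).toNat = g.1 3
      omega
    · show (-(t + s4)).toNat + 0 + 0 + (t + s3).toNat
        + (f.1 4 - (t + s4).toNat - (-(t + s3)).toNat) = g.1 4
      omega



lemma exists_pierce {k : ℕ} (f : Config (Fin 5) k) :
    ∃ x ∈ Xf k, ∀ v, f.1 v ≤ x v ∧ x v ≤ nb f.1 v := by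
  apply exists_pierce' k f.1
  have := f.2; rwa [Fin.sum_univ_five] at this

lemma mem_bound {k n : ℕ}
    (hn : n ∈ {n | ∃ s : Finset (Config (Fin 5) k),
      (↑s : Set (Config (Fin 5) k)).Pairwise
        (fun a b => ¬ (PebbleGraph C5 k).Adj a b) ∧ s.card = n}) :
    n ≤ 6 * (k + 1) := by
  classical
  obtain ⟨s, hs, rfl⟩ := hn
  choose xv hxmem hxp using fun f : Config (Fin 5) k => exists_pierce f
  have hinj : Set.InjOn xv ↑s := by
    intro a ha b hb hab
    by_contra hne
    apply hs ha hb hne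
    have hb' : ∀ v, b.1 v ≤ xv a v ∧ xv a v ≤ nb b.1 v := by rw [hab]; exact hxp b
    exact adj_of_pierce a b hne (xv a) (hxp a) hb'
  calc s.card = (s.image xv).card := (Finset.card_image_of_injOn hinj).symm
    _ ≤ (Xf k).card := by
        apply Finset.card_le_card
        intro y hy
        obtain ⟨a, _, rfl⟩ := Finset.mem_image.mp hy
        exact hxmem a
    _ ≤ 6 * (k + 1) := Xf_card k

lemma indepNum_le (k : ℕ) : indepNum (PebbleGraph C5 k) ≤ 6 * (k + 1) := by
  apply csSup_le
  · exact ⟨0, ∅, by simp⟩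
  · intro n hn
    exact mem_bound hn

lemma not_adj_pile {k i j : ℕ} (f g : Config (Fin 5) k)
    (hf : f.1 = ![i, 0, k - i, 0, 0]) (hg : g.1 = ![j, 0, k - j, 0, 0]) (hij : i ≠ j) :
    ¬ (PebbleGraph C5 k).Adj f g := by
  rintro ⟨hne, m, hsupp, hrow, hcol⟩
  have r0 : m 0 0 + m 0 1 + m 0 2 + m 0 3 + m 0 4 = i := by
    have := hrow 0; rw [Fin.sum_univ_five, hf] at this; simpa using this
  have r1 : m 1 0 + m 1 1 + m 1 2 + m 1 3 + m 1 4 = 0 := by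
    have := hrow 1; rw [Fin.sum_univ_five, hf] at this; simpa using this
  have r4 : m 4 0 + m 4 1 + m 4 2 + m 4 3 + m 4 4 = 0 := by
    have := hrow 4; rw [Fin.sum_univ_five, hf] at this; simpa using this
  have c0 : m 0 0 + m 1 0 + m 2 0 + m 3 0 + m 4 0 = j := by
    have := hcol 0; rw [Fin.sum_univ_five, hg] at this; simpa using this
  have c1 : m 0 1 + m 1 1 + m 2 1 + m 3 1 + m 4 1 = 0 := by
    have := hcol 1; rw [Fin.sum_univ_five, hg] at this; simpa using this
  have c4 : m 0 4 + m 1 4 + m 2 4 + m 3 4 + m 4 4 = 0 := by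
    have := hcol 4; rw [Fin.sum_univ_five, hg] at this; simpa using this
  have z02 : m 0 2 = 0 := by
    by_contra h
    rcases hsupp 0 2 h with h' | h'
    · exact absurd h' (by decide)
    · exact absurd h'.2 (by decide)
  have z03 : m 0 3 = 0 := by
    by_contra h
    rcases hsupp 0 3 h with h' | h'
    · exact absurd h' (by decide)
    · exact absurd h'.2 (by decide)
  have z20 : m 2 0 = 0 := by
    by_contra h
    rcases hsupp 2 0 h with h' | h'
    · exact absurd h' (by decide)
    · exact absurd h'.2 (by decide)
  have z30 : m 3 0 = 0 := by
    by_contra h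
    rcases hsupp 3 0 h with h' | h'
    · exact absurd h' (by decide)
    · exact absurd h'.2 (by decide)
  exact hij (by omega)

lemma indepNum_ge (k : ℕ) : k + 1 ≤ indepNum (PebbleGraph C5 k) := by
  classical
  have hcfg : ∀ i : ℕ, i ≤ k → (∑ v, (![i, 0, k - i, 0, 0] : Fin 5 → ℕ) v) = k := by
    intro i hi
    rw [Fin.sum_univ_five]
    simp only [Matrix.cons_val_zero, Matrix.cons_val_one, Matrix.head_cons]
    show i + 0 + (k - i) + (![i, 0, k - i, 0, 0] : Fin 5 → ℕ) 3
      + (![i, 0, k - i, 0, 0] : Fin 5 → ℕ) 4 = k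
    show i + 0 + (k - i) + 0 + 0 = k
    omega
  let θ : {x // x ∈ Finset.range (k + 1)} → Config (Fin 5) k := fun i =>
    ⟨![i.1, 0, k - i.1, 0, 0], hcfg i.1 (by have := Finset.mem_range.mp i.2; omega)⟩
  have hθ : ∀ i, (θ i).1 = ![i.1, 0, k - i.1, 0, 0] := fun i => rfl
  have hθinj : Function.Injective θ := by
    intro a b hab
    have : (θ a).1 0 = (θ b).1 0 := by rw [hab]
    rw [hθ a, hθ b] at this
    simp only [Matrix.cons_val_zero] at this
    exact Subtype.ext this
  apply le_csSup
  · exact ⟨6 * (k + 1), fun n hn => mem_bound hn⟩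
  · refine ⟨Finset.univ.image θ, ?_, ?_⟩
    · intro a ha b hb hne
      obtain ⟨ia, -, rfl⟩ := Finset.mem_image.mp ha
      obtain ⟨ib, -, rfl⟩ := Finset.mem_image.mp hb
      have hij : (ia : ℕ) ≠ (ib : ℕ) := by
        intro h
        exact hne (congrArg θ (Subtype.ext (by exact_mod_cast h)))
      exact not_adj_pile (θ ia) (θ ib) (hθ ia) (hθ ib) hij
    · rw [Finset.card_image_of_injective _ hθinj]
      simp

end C5Aux

/-- The limit as `k → ∞` of `log α(C₅[k]) / log k` exists and equals `1`. -/
theorem tendsto_log_alpha_C5_pebble :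
    Filter.Tendsto
      (fun k : ℕ => Real.log (indepNum (PebbleGraph C5 k)) / Real.log k)
      Filter.atTop (nhds 1) := by
  have hlog : Filter.Tendsto (fun k : ℕ => Real.log k) Filter.atTop Filter.atTop :=
    Real.tendsto_log_atTop.comp tendsto_natCast_atTop_atTop
  have hupper : Filter.Tendsto (fun k : ℕ => 1 + Real.log 12 / Real.log k)
      Filter.atTop (nhds 1) := by
    have h0 : Filter.Tendsto (fun k : ℕ => Real.log 12 / Real.log k)
        Filter.atTop (nhds 0) := Filter.Tendsto.div_atTop tendsto_const_nhds hlog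
    simpa using (tendsto_const_nhds (x := (1:ℝ))).add h0
  refine tendsto_of_tendsto_of_tendsto_of_le_of_le' tendsto_const_nhds hupper ?_ ?_
  · filter_upwards [Filter.eventually_ge_atTop 2] with k hk
    have hk1 : (1:ℝ) < (k:ℝ) := by exact_mod_cast (by omega : 1 < k)
    have hlogk : 0 < Real.log k := Real.log_pos hk1
    have hα : (k:ℝ) ≤ (indepNum (PebbleGraph C5 k) : ℝ) := by
      have := C5Aux.indepNum_ge k
      exact_mod_cast (by omega : k ≤ indepNum (PebbleGraph C5 k))
    have : Real.log k ≤ Real.log (indepNum (PebbleGraph C5 k)) :=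
      Real.log_le_log (by positivity) hα
    rw [le_div_iff₀ hlogk]
    linarith
  · filter_upwards [Filter.eventually_ge_atTop 2] with k hk
    have hk1 : (1:ℝ) < (k:ℝ) := by exact_mod_cast (by omega : 1 < k)
    have hlogk : 0 < Real.log k := Real.log_pos hk1
    have hαpos : 0 < indepNum (PebbleGraph C5 k) := by
      have := C5Aux.indepNum_ge k; omega
    have hαle : (indepNum (PebbleGraph C5 k) : ℝ) ≤ 12 * k := by
      have h1 := C5Aux.indepNum_le k
      have h2 : indepNum (PebbleGraph C5 k) ≤ 12 * k := by omega
      exact_mod_cast h2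
    have hlogle : Real.log (indepNum (PebbleGraph C5 k)) ≤ Real.log 12 + Real.log k := by
      have := Real.log_le_log (by exact_mod_cast hαpos) hαle
      rwa [Real.log_mul (by norm_num) (by positivity)] at this
    rw [div_le_iff₀ hlogk]
    calc Real.log (indepNum (PebbleGraph C5 k)) ≤ Real.log 12 + Real.log k := hlogle
      _ = (1 + Real.log 12 / Real.log k) * Real.log k := by
          field_simp
          ring
end

section
/- Let G be a finite simple graph with n ≥ 1 vertices, let v be a vertex of G, let N(v) denote the union of {v} with the set of neighbours of v, and let k, m be natural numbers. Suppose f and g are configurations of weight k on G such that: (i) Σ_{u ∈ N(v)} f(u) = Σ_{u ∈ N(v)} g(u) = m; (ii) f(v) ≥ k/n and g(v) ≥ k/n; (iii) for every vertex u, there is an integer b_u ≥ 0 with both f(u) and g(u) lying in the half-open interval [b_u·k/(2n²), (b_u+1)·k/(2n²)); and (iv) the restrictions of f and g to V ∖ N(v) are equal, or are adjacent as configurations of weight k − m in the pebble configuration graph (G ∖ N(v))[k − m] of the induced subgraph on V ∖ N(v). Then f and g are equal or adjacent in G[k]. -/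
open Finset

/-- Key step of the induction: if `f` and `g` are weight-`k` configurations putting the
same total weight `m` on the closed neighbourhood `N(v)`, both putting at least `k/n`
pebbles on `v`, with all their values falling in the same intervals
`[bᵤ·k/(2n²), (bᵤ+1)·k/(2n²))`, and whose restrictions to `V ∖ N(v)` are equal or
adjacent in `(G ∖ N(v))[k − m]`, then `f` and `g` are equal or adjacent in `G[k]`. -/
theorem eq_or_adj_of_chunk {V : Type*} [Fintype V] [DecidableEq V] [Nonempty V]
    (G : SimpleGraph V) [DecidableRel G.Adj] (v : V) (k m : ℕ) (f g : Config V k)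
    (hfm : ∑ u ∈ Finset.univ.filter (fun u => u = v ∨ G.Adj v u), f.1 u = m)
    (hgm : ∑ u ∈ Finset.univ.filter (fun u => u = v ∨ G.Adj v u), g.1 u = m)
    (hfv : (k : ℝ) / (Fintype.card V : ℝ) ≤ (f.1 v : ℝ))
    (hgv : (k : ℝ) / (Fintype.card V : ℝ) ≤ (g.1 v : ℝ))
    (hb : ∀ u : V, ∃ b : ℕ,
      ((b : ℝ) * k / (2 * (Fintype.card V : ℝ) ^ 2) ≤ (f.1 u : ℝ) ∧
        (f.1 u : ℝ) < ((b : ℝ) + 1) * k / (2 * (Fintype.card V : ℝ) ^ 2)) ∧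
      ((b : ℝ) * k / (2 * (Fintype.card V : ℝ) ^ 2) ≤ (g.1 u : ℝ) ∧
        (g.1 u : ℝ) < ((b : ℝ) + 1) * k / (2 * (Fintype.card V : ℝ) ^ 2)))
    (hf' : ∑ u : {u : V | ¬(u = v ∨ G.Adj v u)}, f.1 u.1 = k - m)
    (hg' : ∑ u : {u : V | ¬(u = v ∨ G.Adj v u)}, g.1 u.1 = k - m)
    (hrest :
      (⟨fun u => f.1 u.1, hf'⟩ :
          Config {u : V | ¬(u = v ∨ G.Adj v u)} (k - m)) =
        ⟨fun u => g.1 u.1, hg'⟩ ∨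
      (PebbleGraph (G.induce {u : V | ¬(u = v ∨ G.Adj v u)}) (k - m)).Adj
        ⟨fun u => f.1 u.1, hf'⟩ ⟨fun u => g.1 u.1, hg'⟩) :
    f = g ∨ (PebbleGraph G k).Adj f g := by
  classical
  by_cases hfg : f = g
  · exact Or.inl hfg
  right
  -- k = 0 case: f = g, contradiction
  rcases Nat.eq_zero_or_pos k with hk0 | hkpos
  · exfalso
    apply hfg
    have hf0 : ∀ u, f.1 u = 0 := fun u =>
      (Finset.sum_eq_zero_iff.mp (hk0 ▸ f.2) u (mem_univ u))
    have hg0 : ∀ u, g.1 u = 0 := fun u =>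
      (Finset.sum_eq_zero_iff.mp (hk0 ▸ g.2) u (mem_univ u))
    exact Subtype.ext (funext fun u => by rw [hf0, hg0])
  -- extract the outside transport
  have hout : ∃ m'' : {u : V | ¬(u = v ∨ G.Adj v u)} → {u : V | ¬(u = v ∨ G.Adj v u)} → ℕ,
      (∀ x y, m'' x y ≠ 0 → x = y ∨ G.Adj x.1 y.1) ∧
      (∀ x, ∑ y, m'' x y = f.1 x.1) ∧ (∀ y, ∑ x, m'' x y = g.1 y.1) := by
    rcases hrest with h | h
    · have heq : ∀ x : {u : V | ¬(u = v ∨ G.Adj v u)}, f.1 x.1 = g.1 x.1 := by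
        intro x
        have h2 := congrArg Subtype.val h
        exact congrFun h2 x
      refine ⟨fun x y => if x = y then f.1 x.1 else 0, ?_, ?_, ?_⟩
      · intro x y hxy
        by_cases hne : x = y
        · exact Or.inl hne
        · simp [hne] at hxy
      · intro x; simp
      · intro y
        rw [← heq y]
        simp [eq_comm]
    · obtain ⟨-, mm, h1, h2, h3⟩ := h
      exact ⟨mm, fun x y hxy => (h1 x y hxy).imp id (fun hh => hh), h2, h3⟩
  obtain ⟨m'', he'', hr'', hc''⟩ := hout
  set S : Finset V := Finset.univ.filter (fun u => u = v ∨ G.Adj v u) with hSdef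
  have hvS : v ∈ S := by simp [hSdef]
  set D : ℕ := ∑ u ∈ S.erase v, (g.1 u - min (f.1 u) (g.1 u)) with hDdef
  -- real estimates
  have hn0 : 0 < Fintype.card V := Fintype.card_pos
  have hnR : (0:ℝ) < (Fintype.card V : ℝ) := by exact_mod_cast hn0
  have hkR : (0:ℝ) < (k:ℝ) := by exact_mod_cast hkpos
  have hterm : ∀ u : V, ((g.1 u - min (f.1 u) (g.1 u) : ℕ) : ℝ)
      < (k:ℝ) / (2 * (Fintype.card V:ℝ)^2) := by
    intro u
    obtain ⟨b, ⟨hf1, hf2⟩, hg1, hg2⟩ := hb u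
    rcases le_total (f.1 u) (g.1 u) with hle | hle
    · rw [min_eq_left hle, Nat.cast_sub hle]
      have hexp : ((b:ℝ) + 1) * k / (2 * (Fintype.card V:ℝ)^2)
          = (b:ℝ) * k / (2 * (Fintype.card V:ℝ)^2) + k / (2 * (Fintype.card V:ℝ)^2) := by
        ring
      rw [hexp] at hg2
      linarith
    · rw [min_eq_right hle, Nat.sub_self, Nat.cast_zero]
      positivity
  have hcardR : (((S.erase v).card : ℝ)) ≤ (Fintype.card V : ℝ) - 1 := by
    have h1 : (S.erase v).card < Fintype.card V :=
      lt_of_lt_of_le (Finset.card_erase_lt_of_mem hvS)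
        (le_trans (Finset.card_filter_le _ _) (by simp))
    have h2 : (S.erase v).card + 1 ≤ Fintype.card V := h1
    have h3 : ((S.erase v).card : ℝ) + 1 ≤ (Fintype.card V : ℝ) := by exact_mod_cast h2
    linarith
  have hDR : (D:ℝ) < (f.1 v : ℝ) := by
    have h1 : (D:ℝ) ≤ ((S.erase v).card : ℝ) * ((k:ℝ) / (2 * (Fintype.card V:ℝ)^2)) := by
      rw [hDdef, Nat.cast_sum]
      have := Finset.sum_le_card_nsmul (S.erase v)
        (fun u => ((g.1 u - min (f.1 u) (g.1 u) : ℕ) : ℝ))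
        ((k:ℝ) / (2 * (Fintype.card V:ℝ)^2)) (fun x _ => (hterm x).le)
      rwa [nsmul_eq_mul] at this
    have hε : (0:ℝ) < (k:ℝ) / (2 * (Fintype.card V:ℝ)^2) := by positivity
    have h2 : ((S.erase v).card : ℝ) * ((k:ℝ) / (2 * (Fintype.card V:ℝ)^2))
        ≤ ((Fintype.card V : ℝ) - 1) * ((k:ℝ) / (2 * (Fintype.card V:ℝ)^2)) :=
      mul_le_mul_of_nonneg_right hcardR hε.le
    have h3 : ((Fintype.card V : ℝ) - 1) * ((k:ℝ) / (2 * (Fintype.card V:ℝ)^2))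
        < (k:ℝ) / (Fintype.card V : ℝ) := by
      rw [← mul_div_assoc, div_lt_div_iff₀ (by positivity) hnR]
      nlinarith [mul_pos hkR hnR, mul_pos hkR (mul_pos hnR hnR)]
    calc (D:ℝ) ≤ _ := h1
      _ ≤ _ := h2
      _ < (k:ℝ) / (Fintype.card V : ℝ) := h3
      _ ≤ (f.1 v : ℝ) := hfv
  have hDle : D ≤ f.1 v := by exact_mod_cast hDR.le
  -- the transport
  set M : V → V → ℕ := fun u w =>
    if h : (u = v ∨ G.Adj v u) ∧ (w = v ∨ G.Adj v w) then
      if u = v then (if w = v then f.1 v - D else g.1 w - min (f.1 w) (g.1 w))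
      else if w = v then f.1 u - min (f.1 u) (g.1 u)
      else if u = w then min (f.1 u) (g.1 u) else 0
    else if h2 : ¬(u = v ∨ G.Adj v u) ∧ ¬(w = v ∨ G.Adj v w) then
      m'' ⟨u, h2.1⟩ ⟨w, h2.2⟩
    else 0 with hMdef
  -- value lemmas
  have hMvv : M v v = f.1 v - D := by
    rw [hMdef]; simp
  have hMvw : ∀ w, (w = v ∨ G.Adj v w) → w ≠ v →
      M v w = g.1 w - min (f.1 w) (g.1 w) := by
    intro w hw hwv
    rw [hMdef]
    beta_reduce
    rw [dif_pos ⟨Or.inl rfl, hw⟩, if_pos rfl, if_neg hwv]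
  have hMuv : ∀ u, (u = v ∨ G.Adj v u) → u ≠ v →
      M u v = f.1 u - min (f.1 u) (g.1 u) := by
    intro u hu huv
    rw [hMdef]
    beta_reduce
    rw [dif_pos ⟨hu, Or.inl rfl⟩, if_neg huv, if_pos rfl]
  have hMuu : ∀ u, (u = v ∨ G.Adj v u) → u ≠ v →
      M u u = min (f.1 u) (g.1 u) := by
    intro u hu huv
    rw [hMdef]
    beta_reduce
    rw [dif_pos ⟨hu, hu⟩, if_neg huv, if_neg huv, if_pos rfl]
  have hMzero : ∀ u w, (u = v ∨ G.Adj v u) → (w = v ∨ G.Adj v w) →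
      u ≠ v → w ≠ v → u ≠ w → M u w = 0 := by
    intro u w hu hw huv hwv huw
    rw [hMdef]
    beta_reduce
    rw [dif_pos ⟨hu, hw⟩, if_neg huv, if_neg hwv, if_neg huw]
  have hMout : ∀ u w (hu : ¬(u = v ∨ G.Adj v u)) (hw : ¬(w = v ∨ G.Adj v w)),
      M u w = m'' ⟨u, hu⟩ ⟨w, hw⟩ := by
    intro u w hu hw
    rw [hMdef]
    beta_reduce
    rw [dif_neg (fun h => hu h.1), dif_pos ⟨hu, hw⟩]
  have hMmix1 : ∀ u w, (u = v ∨ G.Adj v u) → ¬(w = v ∨ G.Adj v w) → M u w = 0 := by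
    intro u w hu hw
    rw [hMdef]
    beta_reduce
    rw [dif_neg (fun h => hw h.2), dif_neg (fun h => h.1 hu)]
  have hMmix2 : ∀ u w, ¬(u = v ∨ G.Adj v u) → (w = v ∨ G.Adj v w) → M u w = 0 := by
    intro u w hu hw
    rw [hMdef]
    beta_reduce
    rw [dif_neg (fun h => hu h.1), dif_neg (fun h => h.2 hw)]
  -- conversion between filter sums and subtype sums
  have hsub : ∀ (h : V → ℕ),
      ∑ w ∈ Finset.univ.filter (fun u => ¬(u = v ∨ G.Adj v u)), h w
        = ∑ x : {u : V | ¬(u = v ∨ G.Adj v u)}, h x.1 := by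
    intro h
    exact Finset.sum_subtype _ (fun x => by simp [Set.mem_setOf_eq]) h
  refine ⟨hfg, M, ?_, ?_, ?_⟩
  · -- edges
    intro u w hne0
    by_cases hu : u = v ∨ G.Adj v u <;> by_cases hw : w = v ∨ G.Adj v w
    · by_cases huv : u = v <;> by_cases hwv : w = v
      · exact Or.inl (huv.trans hwv.symm)
      · right
        rw [huv]
        exact hw.resolve_left hwv
      · right
        rw [hwv]
        exact (hu.resolve_left huv).symm
      · by_cases huw : u = w
        · exact Or.inl huw
        · rw [hMzero u w hu hw huv hwv huw] at hne0
          exact absurd rfl hne0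
    · rw [hMmix1 u w hu hw] at hne0; exact absurd rfl hne0
    · rw [hMmix2 u w hu hw] at hne0; exact absurd rfl hne0
    · rw [hMout u w hu hw] at hne0
      rcases he'' ⟨u, hu⟩ ⟨w, hw⟩ hne0 with h | h
      · exact Or.inl (congrArg Subtype.val h)
      · exact Or.inr h
  · -- row sums
    intro u
    rw [← Finset.sum_filter_add_sum_filter_not Finset.univ
      (fun w => w = v ∨ G.Adj v w) (M u)]
    by_cases hu : u = v ∨ G.Adj v u
    · have hz : ∑ w ∈ Finset.univ.filter (fun w => ¬(w = v ∨ G.Adj v w)), M u w = 0 :=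
        Finset.sum_eq_zero (fun w hwmem => hMmix1 u w hu (by simpa using (mem_filter.mp hwmem).2))
      rw [hz, add_zero]
      by_cases huv : u = v
      · rw [huv]
        rw [← Finset.add_sum_erase _ _ hvS, hMvv]
        have hrest2 : ∑ w ∈ S.erase v, M v w = D := by
          rw [hDdef]
          refine Finset.sum_congr rfl (fun w hwmem => ?_)
          have hw1 := (Finset.mem_erase.mp hwmem).1
          have hw2 := (mem_filter.mp (Finset.mem_erase.mp hwmem).2).2
          exact hMvw w hw2 hw1
        rw [hrest2]
        omega
      · have huS : u ∈ S := by simp [hSdef, hu]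
        rw [← Finset.add_sum_erase _ _ huS, hMuu u hu huv]
        have hv_mem : v ∈ S.erase u := Finset.mem_erase.mpr ⟨fun h => huv h.symm, hvS⟩
        have hrest2 : ∑ w ∈ S.erase u, M u w = f.1 u - min (f.1 u) (g.1 u) := by
          rw [Finset.sum_eq_single_of_mem v hv_mem]
          · exact hMuv u hu huv
          · intro w hwmem hwv
            have hw1 := (Finset.mem_erase.mp hwmem).1
            have hw2 := (mem_filter.mp (Finset.mem_erase.mp hwmem).2).2
            exact hMzero u w hu hw2 huv hwv (fun h => hw1 h.symm)
        rw [hrest2]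
        have := min_le_left (f.1 u) (g.1 u)
        omega
    · have hz : ∑ w ∈ S, M u w = 0 :=
        Finset.sum_eq_zero (fun w hwmem => hMmix2 u w hu (mem_filter.mp hwmem).2)
      rw [hz, zero_add, hsub (M u)]
      rw [← hr'' ⟨u, hu⟩]
      exact Finset.sum_congr rfl (fun x _ => hMout u x.1 hu x.2)
  · -- column sums
    intro w
    rw [← Finset.sum_filter_add_sum_filter_not Finset.univ
      (fun u => u = v ∨ G.Adj v u) (fun u => M u w)]
    by_cases hw : w = v ∨ G.Adj v w
    · have hz : ∑ u ∈ Finset.univ.filter (fun u => ¬(u = v ∨ G.Adj v u)), M u w = 0 :=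
        Finset.sum_eq_zero (fun u humem => hMmix2 u w (by simpa using (mem_filter.mp humem).2) hw)
      rw [hz, add_zero]
      by_cases hwv : w = v
      · subst hwv
        rw [← Finset.add_sum_erase _ _ hvS, hMvv]
        have hrest2 : ∑ u ∈ S.erase w, M u w
            = ∑ u ∈ S.erase w, (f.1 u - min (f.1 u) (g.1 u)) := by
          refine Finset.sum_congr rfl (fun u humem => ?_)
          have hu1 := (Finset.mem_erase.mp humem).1
          have hu2 := (mem_filter.mp (Finset.mem_erase.mp humem).2).2
          exact hMuv u hu2 hu1
        rw [hrest2]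
        have hA : ∑ u ∈ S.erase w, (f.1 u - min (f.1 u) (g.1 u))
            = ∑ u ∈ S.erase w, f.1 u - ∑ u ∈ S.erase w, min (f.1 u) (g.1 u) :=
          Finset.sum_tsub_distrib _ (fun x _ => min_le_left _ _)
        have hB : D = ∑ u ∈ S.erase w, g.1 u - ∑ u ∈ S.erase w, min (f.1 u) (g.1 u) := by
          rw [hDdef]
          exact Finset.sum_tsub_distrib _ (fun x _ => min_le_right _ _)
        have hCA : ∑ u ∈ S.erase w, min (f.1 u) (g.1 u) ≤ ∑ u ∈ S.erase w, f.1 u :=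
          Finset.sum_le_sum (fun x _ => min_le_left _ _)
        have hCB : ∑ u ∈ S.erase w, min (f.1 u) (g.1 u) ≤ ∑ u ∈ S.erase w, g.1 u :=
          Finset.sum_le_sum (fun x _ => min_le_right _ _)
        have hfm2 : f.1 w + ∑ u ∈ S.erase w, f.1 u = m := by
          rw [Finset.add_sum_erase _ _ hvS]; exact hfm
        have hgm2 : g.1 w + ∑ u ∈ S.erase w, g.1 u = m := by
          rw [Finset.add_sum_erase _ _ hvS]; exact hgm
        rw [hA]
        omega
      · have hwS : w ∈ S := by simp [hSdef, hw]
        rw [← Finset.add_sum_erase _ _ hwS, hMuu w hw hwv]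
        have hv_mem : v ∈ S.erase w := Finset.mem_erase.mpr ⟨fun h => hwv h.symm, hvS⟩
        have hrest2 : ∑ u ∈ S.erase w, M u w = g.1 w - min (f.1 w) (g.1 w) := by
          rw [Finset.sum_eq_single_of_mem v hv_mem]
          · exact hMvw w hw hwv
          · intro u humem huv
            have hu1 := (Finset.mem_erase.mp humem).1
            have hu2 := (mem_filter.mp (Finset.mem_erase.mp humem).2).2
            exact hMzero u w hu2 hw huv hwv (fun h => hu1 h)
        rw [hrest2]
        have := min_le_right (f.1 w) (g.1 w)
        omega
    · have hz : ∑ u ∈ S, M u w = 0 :=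
        Finset.sum_eq_zero (fun u humem => hMmix1 u w (mem_filter.mp humem).2 hw)
      rw [hz, zero_add, hsub (fun u => M u w)]
      rw [← hc'' ⟨w, hw⟩]
      exact Finset.sum_congr rfl (fun x _ => hMout x.1 w x.2 hw)
end
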